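/- Let p : ℤ → ℤ be defined by p(n) = the number of partitions of n for n ≥ 0 and p(n) = 0 for n < 0. Then for every integer n ≥ 1, ∑_{j ∈ ℤ} (−1)^j p(n − j(3j−1)/2) = 0; equivalently, p(n) = ∑_{j ∈ ℤ, j ≠ 0} (−1)^{j+1} p(n − j(3j−1)/2) (Euler's pentagonal-number recurrence for the partition function). -/

import Mathlib

namespace EulerPent

open Multiset

/-- The pentagonal number. -/
def g (j : ℤ) : ℤ := j * (3 * j - 1) / 2

lemma two_g (j : ℤ) : 2 * g j = j * (3 * j - 1) := by
  have h : ∃ k, j * (3 * j - 1) = 2 * k := by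
    rcases Int.even_or_odd j with ⟨k, hk⟩ | ⟨k, hk⟩
    · exact ⟨k * (3 * j - 1), by rw [hk]; ring⟩
    · exact ⟨j * (3 * k + 1), by rw [hk]; ring⟩
  obtain ⟨k, hk⟩ := h
  rw [g, hk, Int.mul_ediv_cancel_left _ (by norm_num)]

lemma g_succ (j : ℤ) : g (j + 1) = g j + 3 * j + 1 := by
  have h1 := two_g j
  have h2 := two_g (j + 1)
  have h3 : 2 * g (j + 1) = 2 * g j + 6 * j + 2 := by linear_combination h2 - h1
  omega

lemma g_zero : g 0 = 0 := rfl

lemma g_nonneg (j : ℤ) : 0 ≤ g j := by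
  have h := two_g j
  have h2 : 0 ≤ j * (3 * j - 1) := by
    rcases le_or_gt j 0 with hj | hj
    · have : 3 * j - 1 ≤ 0 := by omega
      exact Int.mul_nonneg_iff.2 (Or.inr ⟨hj, this⟩)
    · exact mul_nonneg (by omega) (by omega)
  omega

lemma g_bound {j : ℤ} {N : ℕ} (h : g j ≤ (N : ℤ)) : -(N : ℤ) ≤ j ∧ j ≤ (N : ℤ) := by
  have h2 := two_g j
  constructor
  · by_contra hc
    push_neg at hc
    nlinarith
  · by_contra hc
    push_neg at hc
    nlinarith

/-- One step of the Bressoud–Zeilberger involution on pairs `(j, s)`. -/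
def step (j : ℤ) (s : Multiset ℕ) : ℤ × Multiset ℕ :=
  if s = 0 ∧ j < 0 then (j + 1, replicate (-3 * j - 1).toNat 1)
  else if s ≠ 0 ∧ (Multiset.card s : ℤ) + 3 * j ≤ (s.sup : ℤ) then
    (j + 1, (s.erase s.sup).map (· + 1) +
      replicate ((s.sup : ℤ) - (Multiset.card s : ℤ) - 3 * j).toNat 1)
  else
    (j - 1, (s.filter (fun x => 2 ≤ x)).map (· - 1) +
      (if ((Multiset.card s : ℤ) + 3 * j - 2).toNat = 0 then 0
       else {((Multiset.card s : ℤ) + 3 * j - 2).toNat}))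

lemma sup_mem {s : Multiset ℕ} (h : s ≠ 0) : s.sup ∈ s := by
  induction s using Multiset.induction_on with
  | empty => exact absurd rfl h
  | cons a t ih =>
    rw [Multiset.sup_cons]
    rcases eq_or_ne t 0 with rfl | ht
    · simp
    · rcases le_total a t.sup with h' | h'
      · rw [sup_eq_right.2 h']
        exact Multiset.mem_cons_of_mem (ih ht)
      · rw [sup_eq_left.2 h']
        exact Multiset.mem_cons_self a t

lemma sum_map_add_one (s : Multiset ℕ) :
    (s.map (· + 1)).sum = s.sum + Multiset.card s := by
  induction s using Multiset.induction_on with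
  | empty => simp
  | cons a t ih => simp [ih]; omega

lemma sum_map_pred (s : Multiset ℕ) (h : ∀ x ∈ s, 1 ≤ x) :
    (((s.map (· - 1)).sum : ℕ) : ℤ) = (s.sum : ℤ) - (Multiset.card s : ℤ) := by
  induction s using Multiset.induction_on with
  | empty => simp
  | cons a t ih =>
    have ha := h a (Multiset.mem_cons_self a t)
    have ht : ∀ x ∈ t, 1 ≤ x := fun x hx => h x (Multiset.mem_cons_of_mem hx)
    have iht := ih ht
    simp only [Multiset.map_cons, Multiset.sum_cons, Multiset.card_cons]
    omega

lemma ones_decomp (s : Multiset ℕ) (h : ∀ x ∈ s, 0 < x) :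
    s.filter (fun x => 2 ≤ x) +
      replicate (Multiset.card (s.filter (fun x => ¬ 2 ≤ x))) 1 = s := by
  conv_rhs => rw [← Multiset.filter_add_not (fun x => 2 ≤ x) s]
  congr 1
  symm
  rw [Multiset.eq_replicate]
  refine ⟨rfl, fun b hb => ?_⟩
  rw [Multiset.mem_filter] at hb
  have := h b hb.1
  omega


lemma step_eq1 {j : ℤ} {s : Multiset ℕ} (h : s = 0 ∧ j < 0) :
    step j s = (j + 1, replicate (-3 * j - 1).toNat 1) := by
  rw [step, if_pos h]

lemma step_eq2 {j : ℤ} {s : Multiset ℕ} (h1 : ¬(s = 0 ∧ j < 0))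
    (h2 : s ≠ 0 ∧ (Multiset.card s : ℤ) + 3 * j ≤ (s.sup : ℤ)) :
    step j s = (j + 1, (s.erase s.sup).map (· + 1) +
      replicate ((s.sup : ℤ) - (Multiset.card s : ℤ) - 3 * j).toNat 1) := by
  rw [step, if_neg h1, if_pos h2]

lemma step_eq3 {j : ℤ} {s : Multiset ℕ} (h1 : ¬(s = 0 ∧ j < 0))
    (h2 : ¬(s ≠ 0 ∧ (Multiset.card s : ℤ) + 3 * j ≤ (s.sup : ℤ))) :
    step j s = (j - 1, (s.filter (fun x => 2 ≤ x)).map (· - 1) +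
      (if ((Multiset.card s : ℤ) + 3 * j - 2).toNat = 0 then 0
       else {((Multiset.card s : ℤ) + 3 * j - 2).toNat})) := by
  rw [step, if_neg h1, if_neg h2]

section Spec

variable {N : ℕ} {j : ℤ} {s : Multiset ℕ}

/-- In the third branch, the "new top part" is nonnegative (given the domain conditions). -/
lemma branch3_nonneg (hN : 1 ≤ N) (h1 : ¬(s = 0 ∧ j < 0))
    (h2 : ¬(s ≠ 0 ∧ (Multiset.card s : ℤ) + 3 * j ≤ (s.sup : ℤ)))
    (hpos : ∀ x ∈ s, 0 < x) (hsum : ((s.sum : ℕ) : ℤ) = (N : ℤ) - g j) :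
    0 ≤ (Multiset.card s : ℤ) + 3 * j - 2 := by
  by_cases hs0 : s = 0
  · have hj0 : ¬ j < 0 := fun hj => h1 ⟨hs0, hj⟩
    have hgj : g j = (N : ℤ) := by rw [hs0] at hsum; simp at hsum; omega
    have hj1 : j ≠ 0 := by rintro rfl; rw [g_zero] at hgj; omega
    rw [hs0]
    simp only [Multiset.card_zero, Nat.cast_zero]
    omega
  · have hsup : ¬ ((Multiset.card s : ℤ) + 3 * j ≤ (s.sup : ℤ)) := fun hc => h2 ⟨hs0, hc⟩
    have hs1 : 0 < s.sup := hpos _ (sup_mem hs0)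
    omega

lemma step_spec (hN : 1 ≤ N) (hpos : ∀ x ∈ s, 0 < x)
    (hsum : ((s.sum : ℕ) : ℤ) = (N : ℤ) - g j) :
    (∀ x ∈ (step j s).2, 0 < x) ∧
      ((((step j s).2.sum : ℕ) : ℤ) = (N : ℤ) - g (step j s).1) ∧
      ((step j s).1 = j + 1 ∨ (step j s).1 = j - 1) := by
  by_cases h1 : s = 0 ∧ j < 0
  · rw [step_eq1 h1]
    obtain ⟨hs0, hj⟩ := h1
    have hgj : g j = (N : ℤ) := by rw [hs0] at hsum; simp at hsum; omega
    have hm : (((-3 * j - 1).toNat : ℕ) : ℤ) = -3 * j - 1 := Int.toNat_of_nonneg (by omega)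
    refine ⟨?_, ?_, Or.inl rfl⟩
    · intro x hx
      rw [Multiset.eq_of_mem_replicate hx]
      norm_num
    · have hsg := g_succ j
      simp only [Multiset.sum_replicate, smul_eq_mul, mul_one]
      omega
  · by_cases h2 : s ≠ 0 ∧ (Multiset.card s : ℤ) + 3 * j ≤ (s.sup : ℤ)
    · rw [step_eq2 h1 h2]
      obtain ⟨hs0, hle⟩ := h2
      have hamem : s.sup ∈ s := sup_mem hs0
      have hapos : 0 < s.sup := hpos _ hamem
      have hce : s.sup ::ₘ s.erase s.sup = s := Multiset.cons_erase hamem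
      have hcard : Multiset.card (s.erase s.sup) + 1 = Multiset.card s := by
        have := congrArg (Multiset.card) hce
        simpa using this
      have hsum2 : s.sup + (s.erase s.sup).sum = s.sum := by
        have := congrArg Multiset.sum hce
        simpa using this
      have hk : ((((s.sup : ℤ) - (Multiset.card s : ℤ) - 3 * j).toNat : ℕ) : ℤ)
          = (s.sup : ℤ) - (Multiset.card s : ℤ) - 3 * j := Int.toNat_of_nonneg (by omega)
      refine ⟨?_, ?_, Or.inl rfl⟩
      · intro x hx
        rw [Multiset.mem_add] at hx
        rcases hx with hx | hx
        · obtain ⟨y, hy, rfl⟩ := Multiset.mem_map.1 hx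
          omega
        · rw [Multiset.eq_of_mem_replicate hx]; norm_num
      · have hsg := g_succ j
        simp only [Multiset.sum_add, sum_map_add_one, Multiset.sum_replicate, smul_eq_mul,
          mul_one]
        omega
    · rw [step_eq3 h1 h2]
      have hbZ := branch3_nonneg hN h1 h2 hpos hsum
      have hposR : ∀ x ∈ s.filter (fun x => 2 ≤ x), 2 ≤ x :=
        fun x hx => (Multiset.mem_filter.1 hx).2
      have hdec := ones_decomp s hpos
      have hcard : Multiset.card (s.filter (fun x => 2 ≤ x)) +
          Multiset.card (s.filter (fun x => ¬ 2 ≤ x)) = Multiset.card s := by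
        have := congrArg (Multiset.card) hdec
        simpa using this
      have hsumd : (s.filter (fun x => 2 ≤ x)).sum +
          Multiset.card (s.filter (fun x => ¬ 2 ≤ x)) = s.sum := by
        have := congrArg Multiset.sum hdec
        simpa [Multiset.sum_replicate] using this
      have hmp := sum_map_pred (s.filter (fun x => 2 ≤ x))
        (fun x hx => by have := hposR x hx; omega)
      have hsg := g_succ (j - 1)
      rw [show j - 1 + 1 = j by ring] at hsg
      refine ⟨?_, ?_, Or.inr rfl⟩
      · intro x hx
        rw [Multiset.mem_add] at hx
        rcases hx with hx | hx
        · obtain ⟨y, hy, rfl⟩ := Multiset.mem_map.1 hx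
          have := hposR y hy
          omega
        · split_ifs at hx with hbn
          · simp at hx
          · rw [Multiset.mem_singleton] at hx
            omega
      · have hbn : (((((Multiset.card s : ℤ) + 3 * j - 2).toNat : ℕ)) : ℤ)
            = (Multiset.card s : ℤ) + 3 * j - 2 := Int.toNat_of_nonneg hbZ
        split_ifs with hb0
        · simp only [add_zero]
          omega
        · simp only [Multiset.sum_add, Multiset.sum_singleton]
          omega

lemma step_invol (hN : 1 ≤ N) (hpos : ∀ x ∈ s, 0 < x)
    (hsum : ((s.sum : ℕ) : ℤ) = (N : ℤ) - g j) :
    step (step j s).1 (step j s).2 = (j, s) := by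
  by_cases h1 : s = 0 ∧ j < 0
  · -- branch 1 : `(j+1, replicate m 1)`; the next step takes branch 3.
    rw [step_eq1 h1]
    obtain ⟨hs0, hj⟩ := h1
    have hgj : g j = (N : ℤ) := by rw [hs0] at hsum; simp at hsum; omega
    have hjne : j ≠ 0 := by rintro rfl; rw [g_zero] at hgj; omega
    have hm : (((-3 * j - 1).toNat : ℕ) : ℤ) = -3 * j - 1 := Int.toNat_of_nonneg (by omega)
    set m : ℕ := (-3 * j - 1).toNat with hm_def
    have hm2 : 2 ≤ m := by omega
    have hμ0 : replicate m 1 ≠ (0 : Multiset ℕ) := by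
      intro hc
      have := congrArg Multiset.card hc
      simp at this
      omega
    have hsup1 : (replicate m 1).sup ≤ 1 := by
      rw [Multiset.sup_le]
      intro b hb
      rw [Multiset.eq_of_mem_replicate hb]
    have hc1 : ¬(replicate m 1 = (0 : Multiset ℕ) ∧ j + 1 < 0) := fun hc => hμ0 hc.1
    have hc2 : ¬(replicate m 1 ≠ (0 : Multiset ℕ) ∧
        (Multiset.card (replicate m 1 : Multiset ℕ) : ℤ) + 3 * (j + 1) ≤
          (((replicate m 1 : Multiset ℕ)).sup : ℤ)) := by
      rintro ⟨-, hc⟩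
      rw [Multiset.card_replicate] at hc
      have h9 : (((replicate m 1 : Multiset ℕ)).sup : ℤ) ≤ 1 := by exact_mod_cast hsup1
      omega
    dsimp only
    rw [step_eq3 hc1 hc2]
    have hf0 : (replicate m 1).filter (fun x => 2 ≤ x) = 0 := by
      rw [Multiset.filter_eq_nil]
      intro a ha
      rw [Multiset.eq_of_mem_replicate ha]
      omega
    have hbn0 : ((Multiset.card (replicate m 1) : ℤ) + 3 * (j + 1) - 2).toNat = 0 := by
      rw [Multiset.card_replicate]
      have : (m : ℤ) + 3 * (j + 1) - 2 = 0 := by omega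
      rw [this]
      rfl
    rw [hf0, hbn0, if_pos rfl]
    rw [Prod.mk.injEq]
    exact ⟨by ring, by simp [hs0]⟩
  · by_cases h2 : s ≠ 0 ∧ (Multiset.card s : ℤ) + 3 * j ≤ (s.sup : ℤ)
    · -- branch A : the next step takes branch 3 and restores `(j, s)`.
      rw [step_eq2 h1 h2]
      obtain ⟨hs0, hle⟩ := h2
      have hamem : s.sup ∈ s := sup_mem hs0
      have hapos : 0 < s.sup := hpos _ hamem
      have hce : s.sup ::ₘ s.erase s.sup = s := Multiset.cons_erase hamem
      have hcard : Multiset.card (s.erase s.sup) + 1 = Multiset.card s := by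
        have := congrArg (Multiset.card) hce; simpa using this
      have hk : ((((s.sup : ℤ) - (Multiset.card s : ℤ) - 3 * j).toNat : ℕ) : ℤ)
          = (s.sup : ℤ) - (Multiset.card s : ℤ) - 3 * j := Int.toNat_of_nonneg (by omega)
      set k : ℕ := ((s.sup : ℤ) - (Multiset.card s : ℤ) - 3 * j).toNat with hk_def
      set rest : Multiset ℕ := s.erase s.sup with hrest_def
      set μ : Multiset ℕ := rest.map (· + 1) + replicate k 1 with hμ_def
      have hcardμ : Multiset.card μ = Multiset.card rest + k := by
        rw [hμ_def, Multiset.card_add, Multiset.card_map, Multiset.card_replicate]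
      have hsupμ : ∀ b ∈ μ, b ≤ s.sup + 1 := by
        intro b hb
        rw [hμ_def, Multiset.mem_add] at hb
        rcases hb with hb | hb
        · obtain ⟨y, hy, rfl⟩ := Multiset.mem_map.1 hb
          have : y ≤ s.sup := Multiset.le_sup (Multiset.mem_of_mem_erase hy)
          omega
        · rw [Multiset.eq_of_mem_replicate hb]; omega
      have hc1 : ¬(μ = 0 ∧ j + 1 < 0) := by
        rintro ⟨hμ0, hj1⟩
        have h5 : Multiset.card μ = 0 := by rw [hμ0]; rfl
        rw [hcardμ] at h5
        omega
      have hc2 : ¬(μ ≠ 0 ∧ (Multiset.card μ : ℤ) + 3 * (j + 1) ≤ ((μ.sup : ℤ))) := by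
        rintro ⟨hμ0, hc⟩
        have h3 : (μ.sup : ℕ) ≤ s.sup + 1 := hsupμ _ (sup_mem hμ0)
        rw [hcardμ] at hc
        push_cast at hc
        omega
      dsimp only
      rw [step_eq3 hc1 hc2]
      have hfilt : μ.filter (fun x => 2 ≤ x) = rest.map (· + 1) := by
        rw [hμ_def, Multiset.filter_add]
        have e1 : (rest.map (· + 1)).filter (fun x => 2 ≤ x) = rest.map (· + 1) := by
          rw [Multiset.filter_eq_self]
          intro b hb
          obtain ⟨y, hy, rfl⟩ := Multiset.mem_map.1 hb
          have := hpos y (Multiset.mem_of_mem_erase hy)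
          omega
        have e2 : (replicate k 1).filter (fun x => 2 ≤ x) = 0 := by
          rw [Multiset.filter_eq_nil]
          intro a ha
          rw [Multiset.eq_of_mem_replicate ha]
          omega
        rw [e1, e2, add_zero]
      have hmapmap : (rest.map (· + 1)).map (· - 1) = rest := by
        rw [Multiset.map_map]
        exact Multiset.map_id' rest  -- (x+1)-1 = x definitionally? if not, fix
      have hbn : ((Multiset.card μ : ℤ) + 3 * (j + 1) - 2).toNat = s.sup := by
        have : (Multiset.card μ : ℤ) + 3 * (j + 1) - 2 = (s.sup : ℤ) := by
          rw [hcardμ]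
          push_cast
          omega
        rw [this, Int.toNat_natCast]
      rw [hfilt, hmapmap, hbn, if_neg (by omega)]
      rw [Prod.mk.injEq]
      exact ⟨by ring, by rw [add_comm, Multiset.singleton_add, hce]⟩
    · -- branch 3 : the next step takes branch A (or branch 1, in the degenerate case).
      rw [step_eq3 h1 h2]
      have hbZ := branch3_nonneg hN h1 h2 hpos hsum
      have hposR : ∀ x ∈ s.filter (fun x => 2 ≤ x), 2 ≤ x :=
        fun x hx => (Multiset.mem_filter.1 hx).2
      have hdec := ones_decomp s hpos
      have hcard : Multiset.card (s.filter (fun x => 2 ≤ x)) +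
          Multiset.card (s.filter (fun x => ¬ 2 ≤ x)) = Multiset.card s := by
        have := congrArg (Multiset.card) hdec; simpa using this
      have hsupfle : ∀ y ∈ s.filter (fun x => 2 ≤ x), (y : ℤ) ≤ (Multiset.card s : ℤ) + 3 * j - 1 := by
        intro y hy
        have hy2 := (Multiset.mem_filter.1 hy).1
        have hys : y ≤ s.sup := Multiset.le_sup hy2
        have hs0 : s ≠ 0 := by
          intro hc
          rw [hc] at hy2
          simp at hy2
        have hsup : ¬ ((Multiset.card s : ℤ) + 3 * j ≤ (s.sup : ℤ)) := fun hc => h2 ⟨hs0, hc⟩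
        omega
      by_cases hb0 : ((Multiset.card s : ℤ) + 3 * j - 2).toNat = 0
      · -- degenerate case : everything is a one, the next step takes branch 1.
        have hbZ0 : (Multiset.card s : ℤ) + 3 * j - 2 = 0 := by omega
        have hfilt0 : s.filter (fun x => 2 ≤ x) = 0 := by
          rw [Multiset.filter_eq_nil]
          intro a ha
          have h2a := hsupfle a
          intro hc
          have := h2a (Multiset.mem_filter.2 ⟨ha, hc⟩)
          omega
        have hz : Multiset.card (s.filter (fun x => ¬ 2 ≤ x)) = Multiset.card s := by
          rw [hfilt0] at hcard
          simpa using hcard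
        have hsrep : s = replicate (Multiset.card s) 1 := by
          conv_lhs => rw [← hdec]
          rw [hfilt0, hz, zero_add]
        rw [hfilt0, if_pos hb0]
        have hc1 : ((0 : Multiset ℕ).map (· - 1) + 0 = (0 : Multiset ℕ)) := by simp
        rw [Multiset.map_zero, add_zero]
        have hjneg : j - 1 < 0 := by
          have : 1 ≤ Multiset.card s := by
            by_contra hc
            push_neg at hc
            interval_cases h : Multiset.card s
            · simp at hbZ0; omega
          omega
        dsimp only
        rw [step_eq1 ⟨rfl, hjneg⟩]
        rw [Prod.mk.injEq]
        refine ⟨by ring, ?_⟩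
        have h7 : (-3 * (j - 1) - 1) = ((Multiset.card s : ℕ) : ℤ) := by omega
        rw [h7, Int.toNat_natCast]
        exact hsrep.symm
      · -- main case : the next step takes branch A.
        have hbn : (((((Multiset.card s : ℤ) + 3 * j - 2).toNat : ℕ)) : ℤ)
            = (Multiset.card s : ℤ) + 3 * j - 2 := Int.toNat_of_nonneg hbZ
        set bn : ℕ := ((Multiset.card s : ℤ) + 3 * j - 2).toNat with hbn_def
        set rest2 : Multiset ℕ := s.filter (fun x => 2 ≤ x) with hrest2_def
        rw [if_neg hb0]
        set μ : Multiset ℕ := rest2.map (· - 1) + {bn} with hμ_def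
        have hbmem : bn ∈ μ := by
          rw [hμ_def, Multiset.mem_add]
          exact Or.inr (Multiset.mem_singleton_self bn)
        have hμ0 : μ ≠ 0 := fun hc => by rw [hc] at hbmem; simp at hbmem
        have hsupμ : μ.sup = bn := by
          apply le_antisymm
          · rw [Multiset.sup_le]
            intro b hb
            rw [hμ_def, Multiset.mem_add] at hb
            rcases hb with hb | hb
            · obtain ⟨y, hy, rfl⟩ := Multiset.mem_map.1 hb
              have := hsupfle y hy
              omega
            · rw [Multiset.mem_singleton] at hb
              omega
          · exact Multiset.le_sup hbmem
        have hcardμ : Multiset.card μ = Multiset.card rest2 + 1 := by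
          rw [hμ_def, Multiset.card_add, Multiset.card_singleton, Multiset.card_map]
        have hc1 : ¬(μ = 0 ∧ j - 1 < 0) := fun hc => hμ0 hc.1
        have hc2 : μ ≠ 0 ∧ (Multiset.card μ : ℤ) + 3 * (j - 1) ≤ ((μ.sup : ℤ)) := by
          refine ⟨hμ0, ?_⟩
          rw [hsupμ, hcardμ]
          push_cast
          omega
        dsimp only
        rw [step_eq2 hc1 hc2]
        have herase : μ.erase μ.sup = rest2.map (· - 1) := by
          rw [hsupμ, hμ_def, add_comm, Multiset.singleton_add, Multiset.erase_cons_head]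
        have hmapmap : (rest2.map (· - 1)).map (· + 1) = rest2 := by
          rw [Multiset.map_map]
          have : rest2.map ((· + 1) ∘ (· - 1)) = rest2.map id := by
            apply Multiset.map_congr rfl
            intro x hx
            have := hposR x hx
            simp only [Function.comp_apply, id_eq]
            omega
          rw [this, Multiset.map_id]
        have hkz : (((μ.sup : ℤ)) - (Multiset.card μ : ℤ) - 3 * (j - 1)).toNat
            = Multiset.card (s.filter (fun x => ¬ 2 ≤ x)) := by
          have : ((μ.sup : ℤ)) - (Multiset.card μ : ℤ) - 3 * (j - 1)
              = ((Multiset.card (s.filter (fun x => ¬ 2 ≤ x)) : ℕ) : ℤ) := by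
            rw [hsupμ, hcardμ]
            push_cast
            omega
          rw [this, Int.toNat_natCast]
        rw [Prod.mk.injEq]
        refine ⟨by ring, ?_⟩
        rw [herase, hmapmap, hkz]
        exact hdec

end Spec

section Count

/-- The index type: integers `j` with `g j ≤ N`. -/
abbrev Idx (N : ℕ) : Type := {j : ℤ // g j ≤ (N : ℤ)}

noncomputable instance fintypeIdx (N : ℕ) : Fintype (Idx N) :=
  Fintype.subtype ((Finset.Icc (-(N : ℤ)) N).filter (fun j => g j ≤ (N : ℤ))) (by
    intro j
    simp only [Finset.mem_filter, Finset.mem_Icc]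
    constructor
    · exact fun h => h.2
    · intro h
      exact ⟨⟨(g_bound h).1, (g_bound h).2⟩, h⟩)

/-- The size of the partitions attached to index `x`. -/
abbrev M (N : ℕ) (x : Idx N) : ℕ := ((N : ℤ) - g x.1).toNat

lemma M_spec (N : ℕ) (x : Idx N) : ((M N x : ℕ) : ℤ) = (N : ℤ) - g x.1 :=
  Int.toNat_of_nonneg (by have := x.2; omega)

/-- The total space of the involution. -/
abbrev X (N : ℕ) : Type := Σ x : Idx N, Nat.Partition (M N x)

lemma X_spec (N : ℕ) (x : X N) :
    (∀ y ∈ x.2.parts, 0 < y) ∧ (((x.2.parts.sum : ℕ) : ℤ) = (N : ℤ) - g x.1.1) :=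
  ⟨fun _ h => x.2.parts_pos h, by rw [x.2.parts_sum, M_spec]⟩

lemma X_ext {N : ℕ} {x y : X N} (h1 : x.1.1 = y.1.1) (h2 : x.2.parts = y.2.parts) : x = y := by
  obtain ⟨⟨j, hj⟩, π⟩ := x
  obtain ⟨⟨j', hj'⟩, π'⟩ := y
  dsimp only at h1 h2
  subst h1
  have hππ : π = π' := Nat.Partition.ext h2
  subst hππ
  rfl

/-- The involution on the total space. -/
def F (N : ℕ) (hN : 1 ≤ N) (x : X N) : X N :=
  ⟨⟨(step x.1.1 x.2.parts).1, by
      have hs := step_spec hN (X_spec N x).1 (X_spec N x).2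
      have h0 : (0 : ℤ) ≤ (((step x.1.1 x.2.parts).2.sum : ℕ) : ℤ) := Int.natCast_nonneg _
      have := hs.2.1
      omega⟩,
   ⟨(step x.1.1 x.2.parts).2,
    @fun i hi => (step_spec hN (X_spec N x).1 (X_spec N x).2).1 i hi, by
      have hs := step_spec hN (X_spec N x).1 (X_spec N x).2
      have := hs.2.1
      show (step x.1.1 x.2.parts).2.sum = ((N : ℤ) - g (step x.1.1 x.2.parts).1).toNat
      omega⟩⟩

lemma F_idx (N : ℕ) (hN : 1 ≤ N) (x : X N) :
    (F N hN x).1.1 = x.1.1 + 1 ∨ (F N hN x).1.1 = x.1.1 - 1 :=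
  (step_spec hN (X_spec N x).1 (X_spec N x).2).2.2

lemma F_invol (N : ℕ) (hN : 1 ≤ N) (x : X N) : F N hN (F N hN x) = x := by
  have hinv := step_invol hN (X_spec N x).1 (X_spec N x).2
  apply X_ext
  · show (step (step x.1.1 x.2.parts).1 (step x.1.1 x.2.parts).2).1 = x.1.1
    rw [hinv]
  · show (step (step x.1.1 x.2.parts).1 (step x.1.1 x.2.parts).2).2 = x.2.parts
    rw [hinv]

lemma F_parity (N : ℕ) (hN : 1 ≤ N) (x : X N) :
    Even (F N hN x).1.1 ↔ ¬ Even x.1.1 := by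
  rcases F_idx N hN x with h | h <;> rw [h]
  · exact Int.even_add_one
  · exact Int.even_sub_one

/-- The parity-swapping equivalence induced by the involution. -/
def Fequiv (N : ℕ) (hN : 1 ≤ N) :
    {x : X N // Even x.1.1} ≃ {x : X N // ¬ Even x.1.1} where
  toFun x := ⟨F N hN x.1, by rw [F_parity]; exact fun h => h x.2⟩
  invFun x := ⟨F N hN x.1, by
    by_contra h
    rw [F_parity] at h
    exact x.2 (not_not.1 h)⟩
  left_inv x := Subtype.ext (F_invol N hN x.1)
  right_inv x := Subtype.ext (F_invol N hN x.1)

lemma main_count (N : ℕ) (hN : 1 ≤ N) :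
    ∑ x : X N, ((x.1.1).negOnePow : ℤ) = 0 := by
  have h1 : ∀ x : X N, ((x.1.1).negOnePow : ℤ) = if Even x.1.1 then 1 else -1 := by
    intro x
    split_ifs with h
    · rw [Int.negOnePow_even _ h]; rfl
    · rw [Int.negOnePow_odd _ (Int.not_even_iff_odd.1 h)]; rfl
  rw [Finset.sum_congr rfl (fun x _ => h1 x)]
  rw [Finset.sum_ite, Finset.sum_const, Finset.sum_const]
  have hcard := Fintype.card_congr (Fequiv N hN)
  rw [Fintype.card_subtype, Fintype.card_subtype] at hcard
  rw [hcard]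
  simp

lemma count_eq_sum (N : ℕ) :
    ∑ x : X N, ((x.1.1).negOnePow : ℤ) =
      ∑ x : Idx N, ((x.1).negOnePow : ℤ) * (Fintype.card (Nat.Partition (M N x)) : ℤ) := by
  rw [← Finset.univ_sigma_univ, Finset.sum_sigma]
  refine Finset.sum_congr rfl (fun x _ => ?_)
  simp only [Finset.sum_const, Fintype.card, nsmul_eq_mul]
  ring

lemma idx_sum (N : ℕ) (f : ℤ → ℤ) :
    ∑ x : Idx N, f x.1 =
      ∑ j ∈ (Finset.Icc (-(N : ℤ)) N).filter (fun j => g j ≤ (N : ℤ)), f j :=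
  (Finset.sum_subtype _ (fun j => by
    simp only [Finset.mem_filter, Finset.mem_Icc]
    constructor
    · exact fun h => h.2
    · intro h
      exact ⟨⟨(g_bound h).1, (g_bound h).2⟩, h⟩) f).symm

end Count

end EulerPent

open EulerPent in
/-- Euler's pentagonal-number recurrence for the partition function:
if `p : ℤ → ℤ` equals the partition counting function on nonnegative integers
and vanishes on negative integers, then for every `n ≥ 1` the alternating sum
`∑_{j ∈ ℤ} (-1)^j p(n - j(3j-1)/2)` vanishes; equivalently
`p(n) = ∑_{j ≠ 0} (-1)^{j+1} p(n - j(3j-1)/2)`. -/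
theorem euler_partition_recurrence (p : ℤ → ℤ)
    (hp : ∀ n : ℕ, p n = Fintype.card (Nat.Partition n))
    (hneg : ∀ n : ℤ, n < 0 → p n = 0) :
    ∀ n : ℤ, 1 ≤ n →
      (∑' j : ℤ, (j.negOnePow : ℤ) * p (n - j * (3 * j - 1) / 2) = 0) ∧
      p n = ∑' j : {j : ℤ // j ≠ 0},
        (((j : ℤ) + 1).negOnePow : ℤ) * p (n - (j : ℤ) * (3 * (j : ℤ) - 1) / 2) := by
  intro n hn
  set N : ℕ := n.toNat with hN_def
  have hN1 : 1 ≤ N := by omega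
  have hNn : ((N : ℕ) : ℤ) = n := Int.toNat_of_nonneg (by omega)
  -- the core finite-sum identity
  have hcore : ∑ j ∈ Finset.Icc (-(N : ℤ)) N, ((j.negOnePow : ℤ) * p (n - g j)) = 0 := by
    have e1 : ∑ j ∈ Finset.Icc (-(N : ℤ)) N, ((j.negOnePow : ℤ) * p (n - g j))
        = ∑ j ∈ (Finset.Icc (-(N : ℤ)) N).filter (fun j => g j ≤ (N : ℤ)),
            ((j.negOnePow : ℤ) * p (n - g j)) := by
      symm
      apply Finset.sum_filter_of_ne
      intro x _ hfx
      by_contra hc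
      exact hfx (by rw [hneg _ (by omega), mul_zero])
    rw [e1, ← idx_sum N (fun j => (j.negOnePow : ℤ) * p (n - g j))]
    have e2 : ∀ x : Idx N, ((x.1).negOnePow : ℤ) * p (n - g x.1)
        = ((x.1).negOnePow : ℤ) * (Fintype.card (Nat.Partition (M N x)) : ℤ) := by
      intro x
      have hx2 := x.2
      have h0 : (((n - g x.1).toNat : ℕ) : ℤ) = n - g x.1 := Int.toNat_of_nonneg (by omega)
      have h1 : p (n - g x.1) = (Fintype.card (Nat.Partition ((n - g x.1).toNat)) : ℤ) := by
        conv_lhs => rw [← h0, hp]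
      have h2 : (n - g x.1).toNat = M N x := by rw [← hNn]
      rw [h1, h2]
    rw [Finset.sum_congr rfl (fun x _ => e2 x), ← count_eq_sum, main_count N hN1]
  have hvanish : ∀ b : ℤ, b ∉ Finset.Icc (-(N : ℤ)) N →
      (b.negOnePow : ℤ) * p (n - g b) = 0 := by
    intro b hb
    rw [Finset.mem_Icc] at hb
    have hgb : ¬ g b ≤ (N : ℤ) := fun hc => hb ⟨(g_bound hc).1, (g_bound hc).2⟩
    rw [hneg _ (by omega), mul_zero]
  constructor
  · show (∑' j : ℤ, (j.negOnePow : ℤ) * p (n - g j)) = 0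
    rw [tsum_eq_sum (s := Finset.Icc (-(N : ℤ)) N) hvanish]
    exact hcore
  · show p n = ∑' j : {j : ℤ // j ≠ 0}, (((j : ℤ) + 1).negOnePow : ℤ) * p (n - g (j : ℤ))
    have hvan2 : ∀ b : {j : ℤ // j ≠ 0},
        b ∉ (Finset.Icc (-(N : ℤ)) N).subtype (fun j => j ≠ 0) →
        (((b : ℤ) + 1).negOnePow : ℤ) * p (n - g (b : ℤ)) = 0 := by
      intro b hb
      rw [Finset.mem_subtype] at hb
      rw [Finset.mem_Icc] at hb
      have hgb : ¬ g (b : ℤ) ≤ (N : ℤ) := fun hc => hb ⟨(g_bound hc).1, (g_bound hc).2⟩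
      rw [hneg _ (by omega), mul_zero]
    rw [tsum_eq_sum (s := (Finset.Icc (-(N : ℤ)) N).subtype (fun j => j ≠ 0)) hvan2]
    rw [Finset.sum_subtype_eq_sum_filter
      (fun j : ℤ => (((j : ℤ) + 1).negOnePow : ℤ) * p (n - g j)) (p := fun j => j ≠ 0)]
    rw [Finset.filter_ne']
    have h0mem : (0 : ℤ) ∈ Finset.Icc (-(N : ℤ)) N := by
      rw [Finset.mem_Icc]; omega
    have hsplit := Finset.add_sum_erase _ (fun j : ℤ => (j.negOnePow : ℤ) * p (n - g j)) h0mem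
    have hterm0 : ((0 : ℤ).negOnePow : ℤ) * p (n - g 0) = p n := by
      rw [g_zero, Int.negOnePow_zero, sub_zero, Units.val_one, one_mul]
    have hsum_erase : ∑ j ∈ (Finset.Icc (-(N : ℤ)) N).erase 0,
        ((j.negOnePow : ℤ) * p (n - g j)) = - p n := by
      rw [hterm0] at hsplit
      rw [hcore] at hsplit
      linarith
    calc p n = -(- p n) := by ring
      _ = - ∑ j ∈ (Finset.Icc (-(N : ℤ)) N).erase 0,
            ((j.negOnePow : ℤ) * p (n - g j)) := by rw [hsum_erase]
      _ = ∑ j ∈ (Finset.Icc (-(N : ℤ)) N).erase 0,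
            (-((j.negOnePow : ℤ) * p (n - g j))) := by rw [Finset.sum_neg_distrib]
      _ = ∑ j ∈ (Finset.Icc (-(N : ℤ)) N).erase 0,
            (((j + 1).negOnePow : ℤ) * p (n - g j)) := by
          refine Finset.sum_congr rfl (fun j _ => ?_)
          rw [Int.negOnePow_succ, Units.val_neg]
          ring
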